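/- For every sequence x = (x_n)_{n≥2} with x_n ∈ {1,…,n} for each n, the set M_x equipped with the restriction d_x of d is a proper metric space, i.e., every closed ball of (M_x, d_x) is compact. -/

import Mathlib

noncomputable section

/-- The plane `ℝ²`, to be equipped with the tree metric. -/
structure TreePlane : Type where
  u : ℝ
  v : ℝ

namespace TreePlane

/-- The tree distance on `ℝ²`. -/
def tdist (p q : TreePlane) : ℝ :=
  if p.u = q.u then |p.v - q.v| else |p.v| + |p.u - q.u| + |q.v|

theorem tdist_self (p : TreePlane) : tdist p p = 0 := by simp [tdist]

theorem tdist_comm (p q : TreePlane) : tdist p q = tdist q p := by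
  unfold tdist
  rcases eq_or_ne p.u q.u with h | h
  · simp [h, abs_sub_comm]
  · simp [h, h.symm, abs_sub_comm]
    ring

theorem tdist_triangle (p q r : TreePlane) : tdist p r ≤ tdist p q + tdist q r := by
  unfold tdist
  rcases eq_or_ne p.u q.u with e1 | e1 <;> rcases eq_or_ne q.u r.u with e2 | e2 <;>
      rcases eq_or_ne p.u r.u with e3 | e3
  · rw [if_pos e1, if_pos e2, if_pos e3]
    exact abs_sub_le _ _ _
  · exact absurd (e1.trans e2) e3
  · exact absurd (e1.symm.trans e3) e2
  · rw [if_pos e1, if_neg e2, if_neg e3, e1]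
    have h1 : |p.v| ≤ |p.v - q.v| + |q.v| := by
      calc |p.v| = |p.v - q.v + q.v| := by ring_nf
        _ ≤ |p.v - q.v| + |q.v| := abs_add_le _ _
    linarith
  · exact absurd (e3.trans e2.symm) e1
  · rw [if_neg e1, if_pos e2, if_neg e3, e2]
    have h1 : |r.v| ≤ |q.v - r.v| + |q.v| := by
      calc |r.v| = |r.v - q.v + q.v| := by ring_nf
        _ ≤ |r.v - q.v| + |q.v| := abs_add_le _ _
        _ = |q.v - r.v| + |q.v| := by rw [abs_sub_comm]
    linarith
  · rw [if_neg e1, if_neg e2, if_pos e3]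
    have h1 : |p.v - r.v| ≤ |p.v| + |r.v| := abs_sub _ _
    have h2 := abs_nonneg (p.u - q.u)
    have h3 := abs_nonneg (q.u - r.u)
    have h4 := abs_nonneg q.v
    linarith
  · rw [if_neg e1, if_neg e2, if_neg e3]
    have h1 : |p.u - r.u| ≤ |p.u - q.u| + |q.u - r.u| := abs_sub_le _ _ _
    have h2 := abs_nonneg q.v
    linarith

theorem tdist_eq_zero {p q : TreePlane} (h : tdist p q = 0) : p = q := by
  unfold tdist at h
  rcases eq_or_ne p.u q.u with e | e
  · rw [if_pos e] at h
    have hv : p.v = q.v := by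
      have := abs_eq_zero.mp h
      linarith
    cases p; cases q; simp_all
  · rw [if_neg e] at h
    exfalso
    have h1 := abs_nonneg p.v
    have h2 := abs_nonneg q.v
    have h3 : 0 < |p.u - q.u| := abs_pos.mpr (sub_ne_zero.mpr e)
    linarith

noncomputable instance : MetricSpace TreePlane where
  dist := tdist
  dist_self := tdist_self
  dist_comm := tdist_comm
  dist_triangle := tdist_triangle
  eq_of_dist_eq_zero := tdist_eq_zero

theorem dist_def (p q : TreePlane) : dist p q = tdist p q := rfl

end TreePlane

open TreePlane

/-- `∑_{i=2}^n e^{i²}`. -/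
def expSum (n : ℕ) : ℝ := ∑ i ∈ Finset.Icc 2 n, Real.exp ((i : ℝ) ^ 2)

/-- `P⁺_{x,n} = (∑_{i=2}^n e^{i²}, e^{x_n})`. -/
def Pp (x : ℕ → ℕ) (n : ℕ) : TreePlane := ⟨expSum n, Real.exp (x n)⟩

/-- `P⁻_{x,n} = (∑_{i=2}^n e^{i²}, −e^{x_n})`. -/
def Pm (x : ℕ → ℕ) (n : ℕ) : TreePlane := ⟨expSum n, -Real.exp (x n)⟩

/-- `M_x = ⋃_{n≥2} {P⁺_{x,n}, P⁻_{x,n}}`, as a subspace of `(ℝ², treeDist)`. -/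
def Mset (x : ℕ → ℕ) : Set TreePlane :=
  ⋃ n ∈ {m : ℕ | 2 ≤ m}, ({Pp x n, Pm x n} : Set TreePlane)

/-- `x = (x_n)_{n≥2}` is a sequence with `x_n ∈ {1,…,n}`. -/
def SeqOK (x : ℕ → ℕ) : Prop := ∀ n, 2 ≤ n → 1 ≤ x n ∧ x n ≤ n

lemma expSum_nonneg (n : ℕ) : 0 ≤ expSum n :=
  Finset.sum_nonneg fun _ _ => (Real.exp_pos _).le

lemma le_expSum {n : ℕ} (hn : 2 ≤ n) : (n : ℝ) ≤ expSum n := by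
  have h1 : Real.exp ((n : ℝ) ^ 2) ≤ expSum n := by
    unfold expSum
    exact Finset.single_le_sum (f := fun i : ℕ => Real.exp ((i:ℝ)^2))
      (fun i _ => (Real.exp_pos ((i:ℝ)^2)).le) (by simp [Finset.mem_Icc, hn])
  have h2 : (n : ℝ) ^ 2 + 1 ≤ Real.exp ((n : ℝ) ^ 2) := Real.add_one_le_exp _
  have h3 : (1 : ℝ) ≤ (n : ℝ) := by exact_mod_cast Nat.one_le_of_lt hn
  nlinarith

lemma expSum_strictMonoOn : StrictMonoOn expSum {m : ℕ | 2 ≤ m} := by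
  intro a ha b hb hab
  unfold expSum
  have hb2 : 2 ≤ b := hb
  have ha2 : 2 ≤ a := ha
  exact Finset.sum_lt_sum_of_subset (Finset.Icc_subset_Icc_right hab.le)
      (i := b) (by simp [Finset.mem_Icc]; omega)
      (by simp [Finset.mem_Icc]; omega) (Real.exp_pos _)
      (fun j _ _ => (Real.exp_pos _).le)

lemma mem_Mset_iff {x : ℕ → ℕ} {q : TreePlane} :
    q ∈ Mset x ↔ ∃ n, 2 ≤ n ∧ (q = Pp x n ∨ q = Pm x n) := by
  simp [Mset, Set.mem_iUnion]

/-- `(M_x, d_x)` is a proper metric space: every closed ball of the metric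
subspace `M_x` of `(ℝ², treeDist)` is compact. -/
theorem Mset_proper (x : ℕ → ℕ) (hx : SeqOK x) :
    ∀ (p : ↥(Mset x)) (r : ℝ), IsCompact (Metric.closedBall p r) := by
  intro p r
  obtain ⟨np, hnp, hpval⟩ := mem_Mset_iff.mp p.2
  -- in both cases, the u-coordinate of p is expSum np
  have hpu : (p : TreePlane).u = expSum np := by
    rcases hpval with h | h <;> rw [h] <;> rfl
  set N : ℕ := max np ⌈r + expSum np⌉₊ with hN
  -- the ball, viewed in TreePlane, is contained in a finite set
  have key : Subtype.val '' (Metric.closedBall p r) ⊆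
      ⋃ n ∈ Finset.Icc 2 N, ({Pp x n, Pm x n} : Set TreePlane) := by
    rintro q ⟨⟨q, hqM⟩, hq, rfl⟩
    obtain ⟨n, hn2, hqn⟩ := mem_Mset_iff.mp hqM
    have hqu : q.u = expSum n := by
      rcases hqn with h | h <;> rw [h] <;> rfl
    have hdist : dist (p : TreePlane) q ≤ r := by
      rw [Metric.mem_closedBall, Subtype.dist_eq, dist_comm] at hq
      exact hq
    have hnN : n ≤ N := by
      by_cases he : (p : TreePlane).u = q.u
      · -- same u-coordinate forces n = np
        have : expSum np = expSum n := by rw [← hpu, ← hqu, he]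
        have : np = n := expSum_strictMonoOn.injOn hnp hn2 this
        omega
      · -- different u-coordinates: distance at least expSum n - expSum np
        have hd : dist (p : TreePlane) q = |(p : TreePlane).v| +
            |(p : TreePlane).u - q.u| + |q.v| := by
          rw [dist_def, tdist, if_neg he]
        have h1 : expSum n - expSum np ≤ |(p : TreePlane).u - q.u| := by
          rw [hpu, hqu]
          calc expSum n - expSum np ≤ |expSum n - expSum np| := le_abs_self _
            _ = |expSum np - expSum n| := abs_sub_comm _ _
        have h2 := abs_nonneg (p : TreePlane).v
        have h3 := abs_nonneg q.v
        have h4 : expSum n ≤ r + expSum np := by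
          have : |(p : TreePlane).u - q.u| ≤ r := by rw [hd] at hdist; linarith
          linarith
        have h5 : (n : ℝ) ≤ (⌈r + expSum np⌉₊ : ℝ) :=
          le_trans (le_expSum hn2) (le_trans h4 (Nat.le_ceil _))
        have h6 : n ≤ ⌈r + expSum np⌉₊ := by exact_mod_cast h5
        omega
    simp only [Set.mem_iUnion]
    exact ⟨n, by simp [Finset.mem_Icc, hn2, hnN], by rcases hqn with h | h <;> simp [h]⟩
  have hfin : (Subtype.val '' (Metric.closedBall p r)).Finite := by
    apply Set.Finite.subset _ key
    apply Set.Finite.biUnion (Finset.Icc 2 N).finite_toSet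
    intro n _
    exact (Set.finite_singleton _).insert _
  have : (Metric.closedBall p r).Finite :=
    (hfin.preimage (Set.injOn_of_injective Subtype.val_injective)).subset
      (Set.subset_preimage_image _ _)
  exact this.isCompact
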